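/- Fix a real number p > 1 and ε ∈ (0, 2/3). For θ ∈ (0,1), and for each of the three quartet topologies t ∈ {12|34, 13|24, 14|23}, let D_t^θ be the CFN quartet distribution on {α,β}^4 for topology t with edge parameter θ^p on each of the four terminal edges and edge parameter θ on the interior edge. Suppose that for some positive integer k, some θ ∈ (0,1), and some function (tree-reconstruction method) M : ({α,β}^4)^k → {12|34, 13|24, 14|23}, for every topology t the probability that M outputs t when applied to k i.i.d. samples from D_t^θ is at least 1 − ε. Then k ≥ (1/2)·(1 − (3/2)ε)²·p². -/

import Mathlib

open scoped BigOperators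

/-- The three resolved topologies on four taxa. -/
inductive QuartetTopology : Type
  | t12_34 : QuartetTopology
  | t13_24 : QuartetTopology
  | t14_23 : QuartetTopology
deriving DecidableEq

/-- The CFN transition matrix with edge parameter `η`. -/
noncomputable def cfnM (η : ℝ) (a b : Bool) : ℝ :=
  if a = b then (1 + η) / 2 else (1 - η) / 2

/-- The CFN quartet distribution on `{α,β}^4` for topology `t`, with interior edge
parameter `ηint` and (common) terminal edge parameter `ηterm`. -/
noncomputable def cfnQuartet (t : QuartetTopology) (ηint ηterm : ℝ) (s : Fin 4 → Bool) : ℝ :=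
  match t with
  | .t12_34 => ∑ u : Bool, ∑ v : Bool,
      (1 / 2) * cfnM ηint u v * cfnM ηterm u (s 0) * cfnM ηterm u (s 1) *
        cfnM ηterm v (s 2) * cfnM ηterm v (s 3)
  | .t13_24 => ∑ u : Bool, ∑ v : Bool,
      (1 / 2) * cfnM ηint u v * cfnM ηterm u (s 0) * cfnM ηterm v (s 1) *
        cfnM ηterm u (s 2) * cfnM ηterm v (s 3)
  | .t14_23 => ∑ u : Bool, ∑ v : Bool,
      (1 / 2) * cfnM ηint u v * cfnM ηterm u (s 0) * cfnM ηterm v (s 1) *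
        cfnM ηterm v (s 2) * cfnM ηterm u (s 3)

/-! ### Auxiliary lemmas -/

section Aux

open Finset

/-- Enumerate sums over `Fin 4 → Bool`. -/
lemma cfn_sum_pi4 (f : (Fin 4 → Bool) → ℝ) :
    ∑ s : Fin 4 → Bool, f s = ∑ a : Bool, ∑ b : Bool, ∑ c : Bool, ∑ d : Bool, f ![a,b,c,d] := by
  rw [← Equiv.sum_comp (⟨fun x => ![x.1, x.2.1, x.2.2.1, x.2.2.2], fun s => (s 0, s 1, s 2, s 3),
     by rintro ⟨a,b,c,d⟩; simp, by intro s; funext i; fin_cases i <;> rfl⟩ :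
     (Bool × Bool × Bool × Bool) ≃ (Fin 4 → Bool)) f]
  simp only [Fintype.sum_prod_type, Equiv.coe_fn_mk]

lemma cfn_quartet_sum_one (t : QuartetTopology) (θ η : ℝ) :
    ∑ s : Fin 4 → Bool, cfnQuartet t θ η s = 1 := by
  cases t <;>
  · rw [cfn_sum_pi4]
    simp only [cfnQuartet, cfnM, Fintype.sum_bool, Matrix.cons_val_zero, Matrix.cons_val_one,
      Matrix.head_cons, Matrix.cons_val_two, Matrix.tail_cons, Matrix.cons_val_three,
      Bool.true_eq_false, Bool.false_eq_true, reduceIte]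
    ring

lemma cfn_diff12 (θ η : ℝ) (s : Fin 4 → Bool) :
    (cfnQuartet .t12_34 θ η s - cfnQuartet .t13_24 θ η s)^2
      = if s 0 ≠ s 3 ∧ s 1 ≠ s 2 then (η^2*(1-θ))^2/16 else 0 := by
  cases h0 : s 0 <;> cases h1 : s 1 <;> cases h2 : s 2 <;> cases h3 : s 3 <;>
  · simp only [cfnQuartet, cfnM, Fintype.sum_bool, h0, h1, h2, h3, ne_eq,
      Bool.true_eq_false, Bool.false_eq_true, not_false_eq_true, not_true_eq_false,
      and_true, and_false, true_and, false_and, and_self, reduceIte]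
    ring

lemma cfn_diff13 (θ η : ℝ) (s : Fin 4 → Bool) :
    (cfnQuartet .t12_34 θ η s - cfnQuartet .t14_23 θ η s)^2
      = if s 0 ≠ s 2 ∧ s 1 ≠ s 3 then (η^2*(1-θ))^2/16 else 0 := by
  cases h0 : s 0 <;> cases h1 : s 1 <;> cases h2 : s 2 <;> cases h3 : s 3 <;>
  · simp only [cfnQuartet, cfnM, Fintype.sum_bool, h0, h1, h2, h3, ne_eq,
      Bool.true_eq_false, Bool.false_eq_true, not_false_eq_true, not_true_eq_false,
      and_true, and_false, true_and, false_and, and_self, reduceIte]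
    ring

set_option maxHeartbeats 1000000 in
lemma cfn_quartet_lb {θ η : ℝ} (hθ0 : 0 < θ) (hθ1 : θ < 1) (hη0 : 0 < η) (hη1 : η < 1)
    (s : Fin 4 → Bool) : (1-η^2)^2/32 ≤ cfnQuartet .t12_34 θ η s := by
  cases h0 : s 0 <;> cases h1 : s 1 <;> cases h2 : s 2 <;> cases h3 : s 3 <;>
  · simp only [cfnQuartet, cfnM, Fintype.sum_bool, h0, h1, h2, h3,
      Bool.true_eq_false, Bool.false_eq_true, reduceIte]
    ring_nf
    nlinarith [sq_nonneg (1-η), sq_nonneg (1+η), sq_nonneg η, sq_nonneg (1-η^2),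
      mul_pos hθ0 (mul_pos hη0 hη0), sq_nonneg (η*(1-θ)), sq_nonneg (η+η*θ),
      mul_nonneg (mul_nonneg hθ0.le hη0.le) hη0.le, sq_nonneg ((1-η)*(1+η)),
      mul_nonneg (sq_nonneg (1-η)) hθ0.le, mul_nonneg (sq_nonneg (1+η)) hθ0.le,
      mul_nonneg (mul_nonneg (sq_nonneg (1-η)) hθ0.le) hη0.le,
      mul_nonneg (mul_nonneg (sq_nonneg (1+η)) hθ0.le) hη0.le]

lemma cfnM_nonneg {η : ℝ} (h1 : η ≤ 1) (hm1 : -1 ≤ η) (a b : Bool) : 0 ≤ cfnM η a b := by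
  unfold cfnM; split <;> linarith

lemma cfn_quartet_nonneg {θ η : ℝ} (hθ0 : 0 ≤ θ) (hθ1 : θ ≤ 1) (hη0 : 0 ≤ η) (hη1 : η ≤ 1)
    (t : QuartetTopology) (s : Fin 4 → Bool) : 0 ≤ cfnQuartet t θ η s := by
  have hM : ∀ a b, 0 ≤ cfnM θ a b := cfnM_nonneg hθ1 (by linarith)
  have hM' : ∀ a b, 0 ≤ cfnM η a b := cfnM_nonneg hη1 (by linarith)
  cases t <;>
  · refine Finset.sum_nonneg fun u _ => Finset.sum_nonneg fun v _ => ?_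
    refine mul_nonneg (mul_nonneg (mul_nonneg (mul_nonneg (mul_nonneg (by norm_num)
      (hM u v)) (hM' u _)) (hM' _ _)) (hM' _ _)) (hM' _ _)

lemma cfn_quartet_pos {θ η : ℝ} (hθ0 : 0 < θ) (hθ1 : θ < 1) (hη0 : 0 < η) (hη1 : η < 1)
    (s : Fin 4 → Bool) : 0 < cfnQuartet .t12_34 θ η s := by
  have hne : 0 < 1 - η^2 := by nlinarith
  calc (0:ℝ) < (1-η^2)^2/32 := by positivity
    _ ≤ _ := cfn_quartet_lb hθ0 hθ1 hη0 hη1 s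

lemma cfn_ind_sum12 (c : ℝ) :
    ∑ s : Fin 4 → Bool, (if s 0 ≠ s 3 ∧ s 1 ≠ s 2 then c else 0) = 4*c := by
  rw [cfn_sum_pi4]; simp [Fintype.sum_bool]; ring

lemma cfn_ind_sum13 (c : ℝ) :
    ∑ s : Fin 4 → Bool, (if s 0 ≠ s 2 ∧ s 1 ≠ s 3 then c else 0) = 4*c := by
  rw [cfn_sum_pi4]; simp [Fintype.sum_bool]; ring

lemma cfn_sqrt_prod {ι : Type*} (s : Finset ι) (g : ι → ℝ) (h : ∀ i, 0 ≤ g i) :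
    Real.sqrt (∏ i ∈ s, g i) = ∏ i ∈ s, Real.sqrt (g i) := by
  classical
  induction s using Finset.induction_on with
  | empty => simp
  | @insert a s ha ih => rw [prod_insert ha, prod_insert ha, Real.sqrt_mul (h a), ih]

lemma cfn_sum_sq_sqrt_sub {X : Type*} [Fintype X] (f g : X → ℝ)
    (hf0 : ∀ x, 0 ≤ f x) (hg0 : ∀ x, 0 ≤ g x)
    (hf1 : ∑ x, f x = 1) (hg1 : ∑ x, g x = 1) :
    ∑ x, (Real.sqrt (f x) - Real.sqrt (g x))^2 = 2 - 2 * ∑ x, Real.sqrt (f x * g x) := by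
  have e1 : ∀ x : X, (Real.sqrt (f x) - Real.sqrt (g x))^2
      = f x + g x - 2 * Real.sqrt (f x * g x) := by
    intro x
    rw [sub_sq, Real.sq_sqrt (hf0 x), Real.sq_sqrt (hg0 x), Real.sqrt_mul (hf0 x)]
    ring
  rw [Finset.sum_congr rfl fun x _ => e1 x]
  rw [Finset.sum_sub_distrib, Finset.sum_add_distrib, hf1, hg1, ← Finset.mul_sum]
  norm_num

lemma cfn_sum_sq_sqrt_add {X : Type*} [Fintype X] (f g : X → ℝ)
    (hf0 : ∀ x, 0 ≤ f x) (hg0 : ∀ x, 0 ≤ g x)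
    (hf1 : ∑ x, f x = 1) (hg1 : ∑ x, g x = 1) :
    ∑ x, (Real.sqrt (f x) + Real.sqrt (g x))^2 = 2 + 2 * ∑ x, Real.sqrt (f x * g x) := by
  have e1 : ∀ x : X, (Real.sqrt (f x) + Real.sqrt (g x))^2
      = f x + g x + 2 * Real.sqrt (f x * g x) := by
    intro x
    rw [add_sq, Real.sq_sqrt (hf0 x), Real.sq_sqrt (hg0 x), Real.sqrt_mul (hf0 x)]
    ring
  rw [Finset.sum_congr rfl fun x _ => e1 x]
  rw [Finset.sum_add_distrib, Finset.sum_add_distrib, hf1, hg1, ← Finset.mul_sum]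
  norm_num

lemma cfn_one_sub_pow_le {b : ℝ} (hb0 : 0 ≤ b) (hb1 : b ≤ 1) (k : ℕ) :
    1 - b^k ≤ k * (1 - b) := by
  induction k with
  | zero => simp
  | succ n ih =>
      have hbn : b^n ≤ 1 := pow_le_one₀ hb0 hb1
      have hbn0 : 0 ≤ b^n := pow_nonneg hb0 n
      rw [pow_succ]
      push_cast
      nlinarith [mul_nonneg hbn0 hb0]

lemma cfn_pair_bound {X : Type*} [Fintype X] {k : ℕ} (f g : X → ℝ)
    (hf0 : ∀ x, 0 ≤ f x) (hg0 : ∀ x, 0 ≤ g x)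
    (hf1 : ∑ x, f x = 1) (hg1 : ∑ x, g x = 1)
    (A : (Fin k → X) → Prop) [DecidablePred A] :
    ∑ ω : Fin k → X, (if A ω then (∏ i, g (ω i)) - (∏ i, f (ω i)) else 0)
      ≤ Real.sqrt (2 * k * (1 - ∑ x, Real.sqrt (f x * g x))) := by
  classical
  set b : ℝ := ∑ x, Real.sqrt (f x * g x) with hbdef
  have hSd := cfn_sum_sq_sqrt_sub f g hf0 hg0 hf1 hg1
  have hb1 : b ≤ 1 := by
    nlinarith [Finset.sum_nonneg (fun x (_ : x ∈ (univ : Finset X)) =>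
      sq_nonneg (Real.sqrt (f x) - Real.sqrt (g x))), hSd]
  have hb0 : 0 ≤ b := Finset.sum_nonneg fun x _ => Real.sqrt_nonneg _
  set F : (Fin k → X) → ℝ := fun ω => ∏ i, f (ω i) with hFdef
  set G : (Fin k → X) → ℝ := fun ω => ∏ i, g (ω i) with hGdef
  have hF0 : ∀ ω, 0 ≤ F ω := fun ω => Finset.prod_nonneg fun i _ => hf0 _
  have hG0 : ∀ ω, 0 ≤ G ω := fun ω => Finset.prod_nonneg fun i _ => hg0 _
  have hF1 : ∑ ω, F ω = 1 := by
    calc ∑ ω : Fin k → X, ∏ i, f (ω i) = ∏ _i : Fin k, ∑ x : X, f x :=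
          (Fintype.prod_sum fun _ x => f x).symm
      _ = 1 := by rw [hf1]; simp
  have hG1 : ∑ ω, G ω = 1 := by
    calc ∑ ω : Fin k → X, ∏ i, g (ω i) = ∏ _i : Fin k, ∑ x : X, g x :=
          (Fintype.prod_sum fun _ x => g x).symm
      _ = 1 := by rw [hg1]; simp
  have hBC : ∑ ω, Real.sqrt (F ω * G ω) = b^k := by
    have e : ∀ ω : Fin k → X, Real.sqrt (F ω * G ω)
        = ∏ i, Real.sqrt (f (ω i) * g (ω i)) := by
      intro ω
      rw [hFdef, hGdef]
      simp only
      rw [← Finset.prod_mul_distrib, cfn_sqrt_prod _ _ (fun i => mul_nonneg (hf0 _) (hg0 _))]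
    rw [Finset.sum_congr rfl fun ω _ => e ω,
      ← Fintype.prod_sum fun (_ : Fin k) x => Real.sqrt (f x * g x)]
    rw [← hbdef, Finset.prod_const, Finset.card_univ, Fintype.card_fin]
  have hbk1 : b^k ≤ 1 := pow_le_one₀ hb0 hb1
  have hSdK := cfn_sum_sq_sqrt_sub F G hF0 hG0 hF1 hG1
  have hSaK := cfn_sum_sq_sqrt_add F G hF0 hG0 hF1 hG1
  rw [hBC] at hSdK hSaK
  have step1 : ∑ ω : Fin k → X, (if A ω then G ω - F ω else 0)
      ≤ (1/2) * ∑ ω, |G ω - F ω| := by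
    have pt : ∀ ω : Fin k → X, (if A ω then G ω - F ω else 0)
        ≤ (G ω - F ω + |G ω - F ω|)/2 := by
      intro ω
      have h1 := le_abs_self (G ω - F ω)
      have h2 := neg_abs_le (G ω - F ω)
      split_ifs <;> linarith
    calc ∑ ω : Fin k → X, (if A ω then G ω - F ω else 0)
        ≤ ∑ ω, (G ω - F ω + |G ω - F ω|)/2 := Finset.sum_le_sum fun ω _ => pt ω
      _ = (1/2) * ∑ ω, |G ω - F ω| := by
          rw [← Finset.sum_div, Finset.sum_add_distrib, Finset.sum_sub_distrib, hF1, hG1]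
          ring
  have habs : ∀ ω, |G ω - F ω|
      = |Real.sqrt (F ω) - Real.sqrt (G ω)| * (Real.sqrt (F ω) + Real.sqrt (G ω)) := by
    intro ω
    have h1 : (Real.sqrt (F ω) - Real.sqrt (G ω)) * (Real.sqrt (F ω) + Real.sqrt (G ω))
        = F ω - G ω := by
      have e1 := Real.sq_sqrt (hF0 ω)
      have e2 := Real.sq_sqrt (hG0 ω)
      nlinarith [e1, e2]
    have h2 : 0 ≤ Real.sqrt (F ω) + Real.sqrt (G ω) :=
      add_nonneg (Real.sqrt_nonneg _) (Real.sqrt_nonneg _)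
    rw [abs_sub_comm, ← h1, abs_mul, abs_of_nonneg h2]
  have cs := Finset.sum_mul_sq_le_sq_mul_sq univ
    (fun ω : Fin k → X => |Real.sqrt (F ω) - Real.sqrt (G ω)|)
    (fun ω => Real.sqrt (F ω) + Real.sqrt (G ω))
  have hsq : ∀ ω : Fin k → X, |Real.sqrt (F ω) - Real.sqrt (G ω)|^2
      = (Real.sqrt (F ω) - Real.sqrt (G ω))^2 := fun ω => sq_abs _
  rw [Finset.sum_congr rfl fun ω _ => hsq ω, hSdK, hSaK] at cs
  have hL1 : (∑ ω, |G ω - F ω|)^2 ≤ (2 - 2*b^k) * (2 + 2*b^k) := by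
    rw [Finset.sum_congr rfl fun ω _ => habs ω]
    exact cs
  have hnn : 0 ≤ ∑ ω, |G ω - F ω| := Finset.sum_nonneg fun ω _ => abs_nonneg _
  have hpow := cfn_one_sub_pow_le hb0 hb1 k
  have key : ((1/2) * ∑ ω, |G ω - F ω|)^2 ≤ 2 * k * (1 - b) := by
    have h4 : (2 + 2*b^k) ≤ 4 := by nlinarith
    have h2k : 2 - 2*b^k ≥ 0 := by nlinarith
    nlinarith [hL1, hpow]
  have := (Real.le_sqrt (by positivity) (by nlinarith [Nat.cast_nonneg (α := ℝ) k] :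
      (0:ℝ) ≤ 2 * k * (1 - b))).2 key
  calc ∑ ω : Fin k → X, (if A ω then G ω - F ω else 0)
      ≤ (1/2) * ∑ ω, |G ω - F ω| := step1
    _ ≤ Real.sqrt (2 * k * (1 - b)) := this

lemma cfn_rpow_chi_bound {θ p : ℝ} (hθ0 : 0 < θ) (hθ1 : θ < 1) (hp : 1 < p) :
    8*((θ^p)^2*(1-θ))^2/(1-(θ^p)^2)^2 ≤ 2/p^2 := by
  have hp0 : (0:ℝ) < p := by linarith
  have hη0 : 0 < θ^p := Real.rpow_pos_of_pos hθ0 p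
  have hη1 : θ^p < 1 := Real.rpow_lt_one hθ0.le hθ1 hp0
  have hsq : (θ^p)^2 = θ^(2*p) := by
    rw [sq, ← Real.rpow_add hθ0, two_mul]
  have hpos : 0 < θ^(2*p) := Real.rpow_pos_of_pos hθ0 _
  have h2p : (1:ℝ) ≤ 2*p := by linarith
  have hB := one_add_mul_self_le_rpow_one_add (by
    have : (0:ℝ) ≤ (1-θ)/θ := div_nonneg (by linarith) hθ0.le
    linarith : (-1:ℝ) ≤ (1-θ)/θ) h2p
  have h1θ : 1 + (1-θ)/θ = θ⁻¹ := by field_simp; ring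
  rw [h1θ, Real.inv_rpow hθ0.le] at hB
  have h3 : (1 + 2*p*((1-θ)/θ)) * θ^(2*p) ≤ 1 := by
    have := mul_le_mul_of_nonneg_right hB hpos.le
    rwa [inv_mul_cancel₀ hpos.ne'] at this
  have h4 := mul_le_mul_of_nonneg_right h3 hθ0.le
  rw [one_mul] at h4
  have e : (1 + 2*p*((1-θ)/θ)) * θ^(2*p) * θ = (θ + 2*p*(1-θ)) * θ^(2*p) := by
    field_simp
  rw [e] at h4
  rw [← hsq] at h4 hpos
  set E2 : ℝ := (θ^p)^2 with hE2
  have key : 2*p*E2*(1-θ) ≤ (1-E2)*θ := by nlinarith [h4]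
  have hE2lt : E2 < 1 := by nlinarith
  have hE2nn : 0 ≤ E2 := sq_nonneg _
  have hl : 0 ≤ 2*p*E2*(1-θ) :=
    mul_nonneg (mul_nonneg (by linarith) hE2nn) (by linarith)
  have keysq := mul_self_le_mul_self hl key
  rw [div_le_div_iff₀ (pow_pos (by linarith : (0:ℝ) < 1 - E2) 2) (by positivity : (0:ℝ) < p^2)]
  nlinarith [keysq, mul_nonneg (sq_nonneg (1-E2)) (by nlinarith : (0:ℝ) ≤ 1-θ^2)]

/-- χ²-type bound for the pair `12|34` vs `13|24`. -/
lemma cfn_chi2_12 {θ η : ℝ} (hθ0 : 0 < θ) (hθ1 : θ < 1) (hη0 : 0 < η) (hη1 : η < 1) :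
    ∑ s : Fin 4 → Bool, (cfnQuartet .t12_34 θ η s - cfnQuartet .t13_24 θ η s)^2
        / cfnQuartet .t12_34 θ η s
      ≤ 8*(η^2*(1-θ))^2/(1-η^2)^2 := by
  have hE : 0 < 1 - η^2 := by nlinarith
  have hpt : ∀ s : Fin 4 → Bool,
      (cfnQuartet .t12_34 θ η s - cfnQuartet .t13_24 θ η s)^2 / cfnQuartet .t12_34 θ η s
        ≤ (if s 0 ≠ s 3 ∧ s 1 ≠ s 2 then 2*(η^2*(1-θ))^2/(1-η^2)^2 else 0) := by
    intro s
    rw [cfn_diff12]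
    split_ifs with h
    · have hP := cfn_quartet_lb hθ0 hθ1 hη0 hη1 s
      have hP0 : 0 < cfnQuartet .t12_34 θ η s := cfn_quartet_pos hθ0 hθ1 hη0 hη1 s
      rw [div_le_iff₀ hP0]
      calc (η^2*(1-θ))^2/16
          = (2*(η^2*(1-θ))^2/(1-η^2)^2) * ((1-η^2)^2/32) := by field_simp; ring
        _ ≤ _ := mul_le_mul_of_nonneg_left hP (by positivity)
    · simp
  calc ∑ s : Fin 4 → Bool, (cfnQuartet .t12_34 θ η s - cfnQuartet .t13_24 θ η s)^2
          / cfnQuartet .t12_34 θ η s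
      ≤ ∑ s : Fin 4 → Bool, (if s 0 ≠ s 3 ∧ s 1 ≠ s 2 then 2*(η^2*(1-θ))^2/(1-η^2)^2 else 0) :=
        Finset.sum_le_sum fun s _ => hpt s
    _ = 4 * (2*(η^2*(1-θ))^2/(1-η^2)^2) := cfn_ind_sum12 _
    _ = 8*(η^2*(1-θ))^2/(1-η^2)^2 := by ring

/-- χ²-type bound for the pair `12|34` vs `14|23`. -/
lemma cfn_chi2_13 {θ η : ℝ} (hθ0 : 0 < θ) (hθ1 : θ < 1) (hη0 : 0 < η) (hη1 : η < 1) :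
    ∑ s : Fin 4 → Bool, (cfnQuartet .t12_34 θ η s - cfnQuartet .t14_23 θ η s)^2
        / cfnQuartet .t12_34 θ η s
      ≤ 8*(η^2*(1-θ))^2/(1-η^2)^2 := by
  have hE : 0 < 1 - η^2 := by nlinarith
  have hpt : ∀ s : Fin 4 → Bool,
      (cfnQuartet .t12_34 θ η s - cfnQuartet .t14_23 θ η s)^2 / cfnQuartet .t12_34 θ η s
        ≤ (if s 0 ≠ s 2 ∧ s 1 ≠ s 3 then 2*(η^2*(1-θ))^2/(1-η^2)^2 else 0) := by
    intro s
    rw [cfn_diff13]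
    split_ifs with h
    · have hP := cfn_quartet_lb hθ0 hθ1 hη0 hη1 s
      have hP0 : 0 < cfnQuartet .t12_34 θ η s := cfn_quartet_pos hθ0 hθ1 hη0 hη1 s
      rw [div_le_iff₀ hP0]
      calc (η^2*(1-θ))^2/16
          = (2*(η^2*(1-θ))^2/(1-η^2)^2) * ((1-η^2)^2/32) := by field_simp; ring
        _ ≤ _ := mul_le_mul_of_nonneg_left hP (by positivity)
    · simp
  calc ∑ s : Fin 4 → Bool, (cfnQuartet .t12_34 θ η s - cfnQuartet .t14_23 θ η s)^2
          / cfnQuartet .t12_34 θ η s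
      ≤ ∑ s : Fin 4 → Bool, (if s 0 ≠ s 2 ∧ s 1 ≠ s 3 then 2*(η^2*(1-θ))^2/(1-η^2)^2 else 0) :=
        Finset.sum_le_sum fun s _ => hpt s
    _ = 4 * (2*(η^2*(1-θ))^2/(1-η^2)^2) := cfn_ind_sum13 _
    _ = 8*(η^2*(1-θ))^2/(1-η^2)^2 := by ring

/-- Hellinger affinity gap is bounded by half the χ² divergence. -/
lemma cfn_hell_le_chi2 {X : Type*} [Fintype X] (f g : X → ℝ)
    (hf : ∀ x, 0 < f x) (hg0 : ∀ x, 0 ≤ g x)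
    (hf1 : ∑ x, f x = 1) (hg1 : ∑ x, g x = 1) :
    1 - ∑ x, Real.sqrt (f x * g x) ≤ (1/2) * ∑ x, (f x - g x)^2 / f x := by
  have hSd := cfn_sum_sq_sqrt_sub f g (fun x => (hf x).le) hg0 hf1 hg1
  have pt : ∀ x : X, (Real.sqrt (f x) - Real.sqrt (g x))^2 ≤ (f x - g x)^2 / f x := by
    intro x
    rw [le_div_iff₀ (hf x)]
    have e1 := Real.sq_sqrt (hf x).le
    have e2 := Real.sq_sqrt (hg0 x)
    have h := mul_nonneg (sq_nonneg (Real.sqrt (f x) - Real.sqrt (g x)))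
      (by positivity : (0:ℝ) ≤ 2*Real.sqrt (f x)*Real.sqrt (g x) + Real.sqrt (g x)^2)
    nlinarith [h, e1, e2]
  have := Finset.sum_le_sum fun x (_ : x ∈ (Finset.univ : Finset X)) => pt x
  linarith [hSd ▸ this]

end Aux

/-- **Theorem 1 of the paper.** If `k` sites evolve i.i.d. under the symmetric two-state
(CFN) model on a four-taxon tree with interior edge parameter `θ` and terminal edge
parameters `θ ^ p` (i.e. interior branch length `x`, terminal branch lengths `p·x`, with
`θ = e^{-2x}`), then any method that reconstructs each of the three topologies correctly
with probability at least `1 - ε` requires `k ≥ (1/2)·(1 - (3/2)ε)²·p²`. -/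
theorem cfn_sequence_length_lower_bound
    (p : ℝ) (hp : 1 < p) (ε : ℝ) (hε : ε ∈ Set.Ioo (0 : ℝ) (2 / 3))
    (k : ℕ) (hk : 0 < k) (θ : ℝ) (hθ : θ ∈ Set.Ioo (0 : ℝ) 1)
    (M : (Fin k → (Fin 4 → Bool)) → QuartetTopology)
    (hM : ∀ t : QuartetTopology,
      1 - ε ≤ ∑ ω : Fin k → Fin 4 → Bool,
        (if M ω = t then ∏ i : Fin k, cfnQuartet t θ (θ ^ p) (ω i) else 0)) :
    (k : ℝ) ≥ (1 / 2) * (1 - (3 / 2) * ε) ^ 2 * p ^ 2 := by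
  classical
  obtain ⟨hθ0, hθ1⟩ := hθ
  obtain ⟨hε0, hε1⟩ := hε
  have hp0 : (0:ℝ) < p := by linarith
  set η : ℝ := θ ^ p with hηdef
  have hη0 : 0 < η := Real.rpow_pos_of_pos hθ0 p
  have hη1 : η < 1 := Real.rpow_lt_one hθ0.le hθ1 hp0
  set f : (Fin 4 → Bool) → ℝ := cfnQuartet .t12_34 θ η with hfdef
  have hfpos : ∀ s, 0 < f s := fun s => cfn_quartet_pos hθ0 hθ1 hη0 hη1 s
  have hf0 : ∀ s, 0 ≤ f s := fun s => (hfpos s).le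
  have hf1 : ∑ s, f s = 1 := cfn_quartet_sum_one _ θ η
  -- the common bound on the Hellinger gap for either wrong topology
  have hgapbound : ∀ g : (Fin 4 → Bool) → ℝ, (∀ x, 0 ≤ g x) → (∑ s, g s = 1) →
      (∑ s : Fin 4 → Bool, (f s - g s)^2 / f s ≤ 8*(η^2*(1-θ))^2/(1-η^2)^2) →
      1 - ∑ s, Real.sqrt (f s * g s) ≤ 1/p^2 := by
    intro g hg0 hg1 hchi
    have h1 := cfn_hell_le_chi2 f g hfpos hg0 hf1 hg1
    have h2 : 8*(η^2*(1-θ))^2/(1-η^2)^2 ≤ 2/p^2 := by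
      rw [hηdef]
      exact cfn_rpow_chi_bound hθ0 hθ1 hp
    calc 1 - ∑ s, Real.sqrt (f s * g s) ≤ (1/2) * ∑ s, (f s - g s)^2 / f s := h1
      _ ≤ (1/2) * (2/p^2) := by linarith
      _ = 1/p^2 := by ring
  -- the pair bounds
  have hpair : ∀ (t : QuartetTopology) (g : (Fin 4 → Bool) → ℝ), (∀ x, 0 ≤ g x) →
      (∑ s, g s = 1) → (1 - ∑ s, Real.sqrt (f s * g s) ≤ 1/p^2) →
      ∑ ω : Fin k → Fin 4 → Bool,
        (if M ω = t then (∏ i, g (ω i)) - (∏ i, f (ω i)) else 0)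
        ≤ Real.sqrt (2*k/p^2) := by
    intro t g hg0 hg1 hgap
    have pb := cfn_pair_bound f g hf0 hg0 hf1 hg1 (fun ω => M ω = t)
    refine pb.trans (Real.sqrt_le_sqrt ?_)
    have hk0 : (0:ℝ) ≤ 2*(k:ℝ) := by positivity
    calc 2*(k:ℝ)*(1 - ∑ s, Real.sqrt (f s * g s)) ≤ 2*(k:ℝ)*(1/p^2) :=
          mul_le_mul_of_nonneg_left hgap hk0
      _ = 2*k/p^2 := by ring
  -- instantiate for the two wrong topologies
  set g2 : (Fin 4 → Bool) → ℝ := cfnQuartet .t13_24 θ η with hg2def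
  set g3 : (Fin 4 → Bool) → ℝ := cfnQuartet .t14_23 θ η with hg3def
  have hg20 : ∀ s, 0 ≤ g2 s := fun s =>
    cfn_quartet_nonneg hθ0.le hθ1.le hη0.le hη1.le _ s
  have hg30 : ∀ s, 0 ≤ g3 s := fun s =>
    cfn_quartet_nonneg hθ0.le hθ1.le hη0.le hη1.le _ s
  have hg21 : ∑ s, g2 s = 1 := cfn_quartet_sum_one _ θ η
  have hg31 : ∑ s, g3 s = 1 := cfn_quartet_sum_one _ θ η
  have hgap2 := hgapbound g2 hg20 hg21 (cfn_chi2_12 hθ0 hθ1 hη0 hη1)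
  have hgap3 := hgapbound g3 hg30 hg31 (cfn_chi2_13 hθ0 hθ1 hη0 hη1)
  have hpair2 := hpair .t13_24 g2 hg20 hg21 hgap2
  have hpair3 := hpair .t14_23 g3 hg30 hg31 hgap3
  -- abbreviations for the "correct" probabilities computed under topology 12|34
  set T1 : ℝ := ∑ ω : Fin k → Fin 4 → Bool,
    (if M ω = .t12_34 then (∏ i, f (ω i)) else 0) with hT1
  set T2 : ℝ := ∑ ω : Fin k → Fin 4 → Bool,
    (if M ω = .t13_24 then (∏ i, f (ω i)) else 0) with hT2
  set T3 : ℝ := ∑ ω : Fin k → Fin 4 → Bool,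
    (if M ω = .t14_23 then (∏ i, f (ω i)) else 0) with hT3
  -- partition identity
  have hpart : T1 + T2 + T3 = 1 := by
    have e : ∀ ω : Fin k → Fin 4 → Bool,
        (if M ω = .t12_34 then (∏ i, f (ω i)) else 0)
        + ((if M ω = .t13_24 then (∏ i, f (ω i)) else 0)
        + (if M ω = .t14_23 then (∏ i, f (ω i)) else 0)) = ∏ i, f (ω i) := by
      intro ω
      cases hMω : M ω <;> simp [hMω]
    have hsum : ∑ ω : Fin k → Fin 4 → Bool, ∏ i, f (ω i) = 1 := by
      calc ∑ ω : Fin k → Fin 4 → Bool, ∏ i, f (ω i)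
          = ∏ _i : Fin k, ∑ s : Fin 4 → Bool, f s := (Fintype.prod_sum fun _ s => f s).symm
        _ = 1 := by rw [hf1]; simp
    rw [hT1, hT2, hT3, add_assoc, ← Finset.sum_add_distrib, ← Finset.sum_add_distrib]
    rw [Finset.sum_congr rfl fun ω _ => e ω]
    exact hsum
  -- hypothesis instantiations
  have h1 : 1 - ε ≤ T1 := hM .t12_34
  have h2 : 1 - ε ≤ T2 + ∑ ω : Fin k → Fin 4 → Bool,
      (if M ω = .t13_24 then (∏ i, g2 (ω i)) - (∏ i, f (ω i)) else 0) := by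
    have := hM .t13_24
    have e : ∑ ω : Fin k → Fin 4 → Bool,
        (if M ω = QuartetTopology.t13_24 then ∏ i, cfnQuartet .t13_24 θ (θ^p) (ω i) else 0)
        = T2 + ∑ ω : Fin k → Fin 4 → Bool,
          (if M ω = .t13_24 then (∏ i, g2 (ω i)) - (∏ i, f (ω i)) else 0) := by
      rw [hT2, ← Finset.sum_add_distrib]
      refine Finset.sum_congr rfl fun ω _ => ?_
      split_ifs <;> [skip; simp] <;> ring
    linarith [e ▸ this]
  have h3 : 1 - ε ≤ T3 + ∑ ω : Fin k → Fin 4 → Bool,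
      (if M ω = .t14_23 then (∏ i, g3 (ω i)) - (∏ i, f (ω i)) else 0) := by
    have := hM .t14_23
    have e : ∑ ω : Fin k → Fin 4 → Bool,
        (if M ω = QuartetTopology.t14_23 then ∏ i, cfnQuartet .t14_23 θ (θ^p) (ω i) else 0)
        = T3 + ∑ ω : Fin k → Fin 4 → Bool,
          (if M ω = .t14_23 then (∏ i, g3 (ω i)) - (∏ i, f (ω i)) else 0) := by
      rw [hT3, ← Finset.sum_add_distrib]
      refine Finset.sum_congr rfl fun ω _ => ?_
      split_ifs <;> [skip; simp] <;> ring
    linarith [e ▸ this]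
  -- assemble
  set R : ℝ := Real.sqrt (2*k/p^2) with hR
  have hRnn : 0 ≤ R := Real.sqrt_nonneg _
  have hR2 : R^2 = 2*k/p^2 := Real.sq_sqrt (by positivity)
  have hfinal : 1 - (3/2)*ε ≤ R := by linarith [hpair2, hpair3]
  have hfnn : 0 ≤ 1 - (3/2)*ε := by linarith
  have hsq2 : (1 - (3/2)*ε)^2 ≤ 2*k/p^2 := by
    calc (1 - (3/2)*ε)^2 ≤ R^2 := by nlinarith
      _ = 2*k/p^2 := hR2
  have hmul := mul_le_mul_of_nonneg_right hsq2 (sq_nonneg p)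
  rw [div_mul_cancel₀ _ (by positivity : (p:ℝ)^2 ≠ 0)] at hmul
  nlinarith [hmul]
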